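/- For every α ∈ (0,1/10] there is a constant c(α) > 0 depending only on α such that the following holds: for every finite metric space (X,d) with at least two points, every chaining functional h of log-concave type, and every probability measure ρ on X, there exists an α-labelled net L on X with val_h(L) ≤ c(α)·max_{x∈X} ∫₀^∞ h(ρ(B(x,r))) dr (the right-hand side being interpreted as +∞ if some ball of positive radius has ρ-measure zero). -/

import Mathlib

open MeasureTheory

noncomputable section

/-- `f` is log-concave on `[0,∞)`. -/
def IsLogConcaveOn (f : ℝ → ℝ) : Prop :=
  ∀ x ∈ Set.Ici (0:ℝ), ∀ y ∈ Set.Ici (0:ℝ), ∀ t ∈ Set.Icc (0:ℝ) 1,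
    f x ^ t * f y ^ (1 - t) ≤ f (t * x + (1 - t) * y)

/-- `f` is a continuous, non-increasing, log-concave probability density on `[0,∞)`
normalized so that `f 0 = 1`. -/
structure IsChainingDensity (f : ℝ → ℝ) : Prop where
  nonneg : ∀ t : ℝ, 0 ≤ t → 0 ≤ f t
  continuousOn : ContinuousOn f (Set.Ici 0)
  antitoneOn : AntitoneOn f (Set.Ici 0)
  logConcave : IsLogConcaveOn f
  total : (∫ t in Set.Ioi (0:ℝ), f t) = 1
  normalized : f 0 = 1

/-- The complementary cumulative distribution function `F(s) = ∫_s^∞ f(t) dt`. -/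
def ccdf (f : ℝ → ℝ) (s : ℝ) : ℝ := ∫ t in Set.Ioi s, f t

/-- The chaining functional `h(p) = F⁻¹(p)`, defined on `(0,1]` as the least
`s ≥ 0` with `F(s) ≤ p`. -/
def chainFn (f : ℝ → ℝ) (p : ℝ) : ℝ := sInf {s : ℝ | 0 ≤ s ∧ ccdf f s ≤ p}

open scoped ENNReal

/-- The extended (`[0,∞]`-valued) chaining functional: `h(p)` is the least `s ≥ 0`
with `F(s) ≤ p`, and `+∞` when no such `s` exists (in particular
`h(0) = lim_{p→0⁺} h(p) ∈ (0,∞]`). -/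
def chainFnE (f : ℝ → ℝ) (p : ℝ) : ℝ≥0∞ :=
  sInf {t : ℝ≥0∞ | ∃ s : ℝ, 0 ≤ s ∧ ccdf f s ≤ p ∧ t = ENNReal.ofReal s}

/-- A probability measure on a finite set, given by its point masses. -/
def IsProbOn {X : Type*} [Fintype X] (μ : X → ℝ) : Prop :=
  (∀ x, 0 ≤ μ x) ∧ (∑ x, μ x) = 1

/-- The mass `μ(B(x,r))` of the closed ball of radius `r` around `x`. -/
def ballMass {X : Type*} [MetricSpace X] [Fintype X] (μ : X → ℝ) (x : X) (r : ℝ) : ℝ :=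
  ∑ y ∈ Finset.univ.filter (fun y => dist x y ≤ r), μ y

/-- `∫₀^∞ h(μ(B(x,r))) dr`, valued in `[0,∞]`. -/
def Hint {X : Type*} [MetricSpace X] [Fintype X] (f : ℝ → ℝ) (μ : X → ℝ) (x : X) : ℝ≥0∞ :=
  ∫⁻ r in Set.Ioi (0:ℝ), chainFnE f (ballMass μ x r)

/-- The diameter of the finite metric space `X`. -/
def fdiam (X : Type*) [MetricSpace X] : ℝ := Metric.diam (Set.univ : Set X)

/-- A rooted tree whose nodes carry a subset of `X` and a nonnegative integer
label; the children of each node are given in order (so that the `i`-th child `W`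
of a node, counting from `1`, has `σ(W) = i`). -/
inductive LTree (X : Type u) : Type u where
  | node (s : Finset X) (m : ℕ) (children : List (LTree X)) : LTree X

namespace LTree

/-- The subset of `X` at the root node. -/
def set {X : Type u} : LTree X → Finset X
  | node s _ _ => s

/-- The label `m` of the root node. -/
def label {X : Type u} : LTree X → ℕ
  | node _ m _ => m

/-- The value of a labelled net:
`val_h(L) = max_{x∈X} Σ_{(V,W) ∈ P_x} α^{m(V)}·diam(X)·h(1/σ(W))`, where the sum
runs over the parent-child edges of the root-to-leaf path `P_x` and `σ(W)` is the
(1-based) position of `W` among the children of `V`. -/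
def val {X : Type u} [MetricSpace X] [Fintype X] (f : ℝ → ℝ) (α : ℝ) : LTree X → ℝ
  | .node _ m cs =>
      (((cs.attach.map (fun c => val f α c.1)).zipIdx.map Prod.swap).map
        (fun p => α ^ m * fdiam X * chainFn f (1 / ((p.1 + 1 : ℕ) : ℝ)) + p.2)).foldr max 0
  decreasing_by
  simp only [LTree.node.sizeOf_spec]
  have := List.sizeOf_lt_of_mem c.2
  omega

end LTree

/-- `L` is a valid `α`-labelled net on the finite metric space `X`: every leaf is
a singleton, the children of every non-leaf node form a partition of it,
`diam(V) ≤ α^{m(V)}·diam(X)` for every node `V`, and `m(C) ≥ m(V)+1` for every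
child `C` of a node `V` (the ordering `σ` is given by the list order). -/
inductive ValidLNet {X : Type u} [MetricSpace X] [Fintype X] (α : ℝ) : LTree X → Prop where
  | node (s : Finset X) (m : ℕ) (cs : List (LTree X))
      (hleaf : cs = [] → s.card = 1)
      (hsub : ∀ c ∈ cs, LTree.set c ⊆ s)
      (hcover : cs ≠ [] → ∀ x ∈ s, ∃ c ∈ cs, x ∈ LTree.set c)
      (hdisj : ∀ i j : Fin cs.length, i ≠ j →
        Disjoint (LTree.set (cs.get i)) (LTree.set (cs.get j)))
      (hdiam : Metric.diam ((s : Set X)) ≤ α ^ m * fdiam X)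
      (hlabel : ∀ c ∈ cs, m + 1 ≤ LTree.label c)
      (hrec : ∀ c ∈ cs, ValidLNet α c) :
      ValidLNet α (.node s m cs)


-- basic lemmas
lemma chainFn_nonneg (f : ℝ → ℝ) (p : ℝ) : 0 ≤ chainFn f p :=
  Real.sInf_nonneg fun _ hs => hs.1

lemma ofReal_chainFn_le (f : ℝ → ℝ) (p : ℝ) :
    ENNReal.ofReal (chainFn f p) ≤ chainFnE f p := by
  refine le_sInf fun t ht => ?_
  obtain ⟨s, hs0, hcs, rfl⟩ := ht
  exact ENNReal.ofReal_le_ofReal (csInf_le ⟨0, fun u hu => hu.1⟩ ⟨hs0, hcs⟩)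

lemma chainFnE_anti (f : ℝ → ℝ) {p q : ℝ} (h : p ≤ q) : chainFnE f q ≤ chainFnE f p :=
  sInf_le_sInf fun t ⟨s, h0, hc, ht⟩ => ⟨s, h0, hc.trans h, ht⟩

section BM
variable {X : Type} [MetricSpace X] [Fintype X]

lemma ballMass_mono (ρ : X → ℝ) (hρ : ∀ x, 0 ≤ ρ x) (x : X) {r r' : ℝ} (h : r ≤ r') :
    ballMass ρ x r ≤ ballMass ρ x r' := by
  apply Finset.sum_le_sum_of_subset_of_nonneg
  · intro y hy
    simp only [Finset.mem_filter] at hy ⊢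
    exact ⟨hy.1, hy.2.trans h⟩
  · exact fun y _ _ => hρ y

lemma ballMass_le_one (ρ : X → ℝ) (hρ : IsProbOn ρ) (x : X) (r : ℝ) :
    ballMass ρ x r ≤ 1 := by
  rw [← hρ.2]
  exact Finset.sum_le_sum_of_subset_of_nonneg (Finset.filter_subset _ _) fun y _ _ => hρ.1 y

end BM

section Greedy
variable {X : Type} [MetricSpace X] [Fintype X] [DecidableEq X]

/-- greedy center: point of `t` maximizing the mass of its `a`-ball. -/
noncomputable def gcenter (ρ : X → ℝ) (a : ℝ) (t : Finset X) (h : t.Nonempty) : X :=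
  (t.exists_max_image (fun y => ballMass ρ y a) h).choose

lemma gcenter_mem (ρ : X → ℝ) (a : ℝ) (t : Finset X) (h : t.Nonempty) :
    gcenter ρ a t h ∈ t :=
  (t.exists_max_image (fun y => ballMass ρ y a) h).choose_spec.1

lemma gcenter_max (ρ : X → ℝ) (a : ℝ) (t : Finset X) (h : t.Nonempty) :
    ∀ y ∈ t, ballMass ρ y a ≤ ballMass ρ (gcenter ρ a t h) a :=
  (t.exists_max_image (fun y => ballMass ρ y a) h).choose_spec.2

/-- the first greedy piece. -/
noncomputable def gpiece (ρ : X → ℝ) (a : ℝ) (t : Finset X) (h : t.Nonempty) : Finset X :=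
  t.filter (fun y => y = gcenter ρ a t h ∨ dist (gcenter ρ a t h) y ≤ 2*a)

lemma gcenter_mem_gpiece (ρ : X → ℝ) (a : ℝ) (t : Finset X) (h : t.Nonempty) :
    gcenter ρ a t h ∈ gpiece ρ a t h := by
  rw [gpiece, Finset.mem_filter]
  exact ⟨gcenter_mem ρ a t h, Or.inl rfl⟩

lemma gpiece_subset (ρ : X → ℝ) (a : ℝ) (t : Finset X) (h : t.Nonempty) :
    gpiece ρ a t h ⊆ t := Finset.filter_subset _ _

lemma gpiece_dist (ρ : X → ℝ) {a : ℝ} (ha : 0 ≤ a) (t : Finset X) (h : t.Nonempty) :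
    ∀ y ∈ gpiece ρ a t h, dist (gcenter ρ a t h) y ≤ 2*a := by
  intro y hy
  rw [gpiece, Finset.mem_filter] at hy
  rcases hy.2 with h1 | h1
  · simp [h1]; linarith
  · exact h1

lemma not_mem_gpiece {ρ : X → ℝ} {a : ℝ} {t : Finset X} {h : t.Nonempty} {y : X}
    (hyt : y ∈ t) (hy : y ∉ gpiece ρ a t h) : 2*a < dist (gcenter ρ a t h) y := by
  rw [gpiece, Finset.mem_filter] at hy
  push_neg at hy
  exact (hy hyt).2

/-- the greedy partition of `t` into pieces with designated centers. -/
noncomputable def pieces (ρ : X → ℝ) (a : ℝ) (t : Finset X) : List (X × Finset X) :=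
  if h : t.Nonempty then
    (gcenter ρ a t h, gpiece ρ a t h) :: pieces ρ a (t \ gpiece ρ a t h)
  else []
termination_by t.card
decreasing_by
  exact Finset.card_lt_card
    (Finset.sdiff_ssubset (gpiece_subset ρ a t h) ⟨_, gcenter_mem_gpiece ρ a t h⟩)

lemma pieces_ne_nil (ρ : X → ℝ) (a : ℝ) {t : Finset X} (h : t.Nonempty) :
    pieces ρ a t ≠ [] := by
  rw [pieces, dif_pos h]
  exact List.cons_ne_nil _ _

lemma pieces_subset (ρ : X → ℝ) (a : ℝ) (t : Finset X) :
    ∀ p ∈ pieces ρ a t, p.2 ⊆ t ∧ p.2.Nonempty := by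
  induction t using Finset.strongInduction with
  | _ t ih =>
    rw [pieces]
    split_ifs with h
    · intro p hp
      rcases List.mem_cons.1 hp with rfl | hp
      · exact ⟨gpiece_subset ρ a t h, ⟨_, gcenter_mem_gpiece ρ a t h⟩⟩
      · have hss : t \ gpiece ρ a t h ⊂ t :=
          Finset.sdiff_ssubset (gpiece_subset ρ a t h) ⟨_, gcenter_mem_gpiece ρ a t h⟩
        have := ih _ hss p hp
        exact ⟨this.1.trans (Finset.sdiff_subset), this.2⟩
    · intro p hp; exact absurd hp List.not_mem_nil

lemma pieces_dist (ρ : X → ℝ) {a : ℝ} (ha : 0 ≤ a) (t : Finset X) :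
    ∀ p ∈ pieces ρ a t, ∀ u ∈ p.2, ∀ v ∈ p.2, dist u v ≤ 4*a := by
  induction t using Finset.strongInduction with
  | _ t ih =>
    rw [pieces]
    split_ifs with h
    · intro p hp
      rcases List.mem_cons.1 hp with rfl | hp
      · intro u hu v hv
        calc dist u v ≤ dist u (gcenter ρ a t h) + dist (gcenter ρ a t h) v := dist_triangle _ _ _
        _ ≤ 2*a + 2*a := by
            rw [dist_comm u]
            exact add_le_add (gpiece_dist ρ ha t h u hu) (gpiece_dist ρ ha t h v hv)
        _ = 4*a := by ring
      · exact ih _ (Finset.sdiff_ssubset (gpiece_subset ρ a t h)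
          ⟨_, gcenter_mem_gpiece ρ a t h⟩) p hp
    · intro p hp; exact absurd hp List.not_mem_nil

lemma pieces_cover (ρ : X → ℝ) (a : ℝ) (t : Finset X) :
    ∀ x ∈ t, ∃ p ∈ pieces ρ a t, x ∈ p.2 := by
  induction t using Finset.strongInduction with
  | _ t ih =>
    rw [pieces]
    intro x hx
    have h : t.Nonempty := ⟨x, hx⟩
    rw [dif_pos h]
    by_cases hxp : x ∈ gpiece ρ a t h
    · exact ⟨_, List.mem_cons_self, hxp⟩
    · obtain ⟨p, hp, hxp2⟩ := ih _ (Finset.sdiff_ssubset (gpiece_subset ρ a t h)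
        ⟨_, gcenter_mem_gpiece ρ a t h⟩) x (Finset.mem_sdiff.2 ⟨hx, hxp⟩)
      exact ⟨p, List.mem_cons_of_mem _ hp, hxp2⟩

lemma pieces_pairwise (ρ : X → ℝ) (a : ℝ) (t : Finset X) :
    (pieces ρ a t).Pairwise (fun p q => Disjoint p.2 q.2) := by
  induction t using Finset.strongInduction with
  | _ t ih =>
    rw [pieces]
    split_ifs with h
    · have hss : t \ gpiece ρ a t h ⊂ t :=
        Finset.sdiff_ssubset (gpiece_subset ρ a t h) ⟨_, gcenter_mem_gpiece ρ a t h⟩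
      refine List.Pairwise.cons ?_ (ih _ hss)
      intro q hq
      have hq2 := (pieces_subset ρ a _ q hq).1
      simp only
      refine Finset.disjoint_left.2 fun y hy1 hy2 => ?_
      exact absurd hy1 (Finset.mem_sdiff.1 (hq2 hy2)).2
    · exact List.Pairwise.nil

lemma pieces_greedy (ρ : X → ℝ) (a : ℝ) (t : Finset X) :
    ∀ (j : ℕ) (p : X × Finset X), (pieces ρ a t)[j]? = some p → ∀ x ∈ p.2,
      ∃ Z : Finset X, Z ⊆ t ∧ Z.card = j + 1 ∧
        (∀ z ∈ Z, ballMass ρ x a ≤ ballMass ρ z a) ∧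
        (Z : Set X).Pairwise (fun u v => 2*a < dist u v) := by
  induction t using Finset.strongInduction with
  | _ t ih =>
    intro j p hp x hx
    rw [pieces] at hp
    split_ifs at hp with h
    · have hss : t \ gpiece ρ a t h ⊂ t :=
        Finset.sdiff_ssubset (gpiece_subset ρ a t h) ⟨_, gcenter_mem_gpiece ρ a t h⟩
      match j with
      | 0 =>
        rw [List.getElem?_cons_zero, Option.some_inj] at hp
        subst hp
        refine ⟨{gcenter ρ a t h}, ?_, by simp, ?_, by simp⟩
        · simp [gcenter_mem ρ a t h]
        · intro z hz
          rw [Finset.mem_singleton] at hz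
          subst hz
          exact gcenter_max ρ a t h x (gpiece_subset ρ a t h hx)
      | (j+1) =>
        rw [List.getElem?_cons_succ] at hp
        obtain ⟨Z, hZsub, hZcard, hZmax, hZsep⟩ := ih _ hss j p hp x hx
        have hzx : x ∈ t := by
          have hmem : p ∈ pieces ρ a (t \ gpiece ρ a t h) := by
            exact List.mem_of_getElem? hp
          have := (pieces_subset ρ a _ p hmem).1 hx
          exact (Finset.mem_sdiff.1 this).1
        have hznotin : gcenter ρ a t h ∉ Z := by
          intro hmem
          have := Finset.mem_sdiff.1 (hZsub hmem)
          exact this.2 (gcenter_mem_gpiece ρ a t h)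
        refine ⟨insert (gcenter ρ a t h) Z, ?_, ?_, ?_, ?_⟩
        · intro y hy
          rcases Finset.mem_insert.1 hy with rfl | hy
          · exact gcenter_mem ρ a t h
          · exact (Finset.mem_sdiff.1 (hZsub hy)).1
        · rw [Finset.card_insert_of_notMem hznotin, hZcard]
        · intro z hz
          rcases Finset.mem_insert.1 hz with rfl | hz
          · exact gcenter_max ρ a t h x hzx
          · exact hZmax z hz
        · rw [Finset.coe_insert]
          refine Set.Pairwise.insert hZsep ?_
          intro w hw _
          have hwt := Finset.mem_sdiff.1 (hZsub hw)
          have := not_mem_gpiece hwt.1 hwt.2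
          constructor
          · exact this
          · rw [dist_comm]; exact this
    · simp at hp

lemma greedy_mass {ρ : X → ℝ} (hρ : IsProbOn ρ) {a : ℝ} {j : ℕ} {x : X} {Z : Finset X}
    (hcard : Z.card = j + 1) (hmax : ∀ z ∈ Z, ballMass ρ x a ≤ ballMass ρ z a)
    (hsep : (Z : Set X).Pairwise fun u v => 2*a < dist u v) :
    ((j : ℝ) + 1) * ballMass ρ x a ≤ 1 := by
  have hdisj : (Z : Set X).PairwiseDisjoint
      (fun z => Finset.univ.filter (fun y => dist z y ≤ a)) := by
    intro u hu v hv huv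
    refine Finset.disjoint_left.2 fun y hy1 hy2 => ?_
    rw [Finset.mem_filter] at hy1 hy2
    have : dist u v ≤ 2*a := by
      calc dist u v ≤ dist u y + dist y v := dist_triangle _ _ _
      _ ≤ a + a := add_le_add hy1.2 (by rw [dist_comm]; exact hy2.2)
      _ = 2*a := by ring
    exact absurd this (not_le.2 (hsep hu hv huv))
  calc ((j : ℝ) + 1) * ballMass ρ x a = ∑ _z ∈ Z, ballMass ρ x a := by
        rw [Finset.sum_const, hcard, nsmul_eq_mul]; push_cast; ring
  _ ≤ ∑ z ∈ Z, ballMass ρ z a := Finset.sum_le_sum hmax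
  _ = ∑ y ∈ Z.biUnion (fun z => Finset.univ.filter (fun y => dist z y ≤ a)), ρ y :=
      (Finset.sum_biUnion hdisj).symm
  _ ≤ ∑ y, ρ y := Finset.sum_le_sum_of_subset_of_nonneg (Finset.subset_univ _)
      fun y _ _ => hρ.1 y
  _ = 1 := hρ.2

end Greedy

section Build
variable {X : Type} [MetricSpace X] [Fintype X]

lemma diam_le_fdiam (s : Finset X) : Metric.diam (s : Set X) ≤ fdiam X :=
  Metric.diam_mono (Set.subset_univ _) Set.finite_univ.isBounded

lemma diam_pos_of_two {s : Finset X} (h2 : 2 ≤ s.card) : 0 < Metric.diam (s : Set X) := by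
  obtain ⟨x, hx, y, hy, hxy⟩ := Finset.one_lt_card.1 h2
  have hb : Bornology.IsBounded (s : Set X) := s.finite_toSet.isBounded
  have := Metric.dist_le_diam_of_mem hb (by exact_mod_cast hx) (by exact_mod_cast hy)
  have := dist_pos.2 hxy
  linarith

/-- the canonical label of a set: the largest `k` with `diam s ≤ α^k · diam X`. -/
noncomputable def ell (α : ℝ) (s : Finset X) : ℕ :=
  sSup {k : ℕ | Metric.diam (s : Set X) ≤ α ^ k * fdiam X}

variable {α : ℝ} {s : Finset X}

lemma ell_exists (hα : 0 < α) (hα1 : α < 1) (hD : 0 < fdiam X)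
    (hs : 0 < Metric.diam (s : Set X)) :
    ∃ k, α ^ k * fdiam X < Metric.diam (s : Set X) := by
  obtain ⟨n, hn⟩ := exists_pow_lt_of_lt_one (div_pos hs hD) hα1
  exact ⟨n, (lt_div_iff₀ hD).1 hn⟩

lemma ell_bdd (hα : 0 < α) (hα1 : α < 1) (hD : 0 < fdiam X)
    (hs : 0 < Metric.diam (s : Set X)) :
    BddAbove {k : ℕ | Metric.diam (s : Set X) ≤ α ^ k * fdiam X} := by
  obtain ⟨N, hN⟩ := ell_exists hα hα1 hD hs
  refine ⟨N, fun k hk => ?_⟩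
  by_contra hc
  push_neg at hc
  have h1 : α ^ k ≤ α ^ N := pow_le_pow_of_le_one hα.le hα1.le hc.le
  have h2 : α ^ k * fdiam X ≤ α ^ N * fdiam X := by nlinarith
  simp only [Set.mem_setOf_eq] at hk
  linarith

lemma ell_le (hα : 0 < α) (hα1 : α < 1) (hD : 0 < fdiam X)
    (hs : 0 < Metric.diam (s : Set X)) :
    Metric.diam (s : Set X) ≤ α ^ (ell α s) * fdiam X := by
  have : ell α s ∈ {k : ℕ | Metric.diam (s : Set X) ≤ α ^ k * fdiam X} :=
    Nat.sSup_mem ⟨0, by simp [diam_le_fdiam]⟩ (ell_bdd hα hα1 hD hs)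
  exact this

lemma ell_ge (hα : 0 < α) (hα1 : α < 1) (hD : 0 < fdiam X)
    (hs : 0 < Metric.diam (s : Set X)) {k : ℕ}
    (h : Metric.diam (s : Set X) ≤ α ^ k * fdiam X) : k ≤ ell α s :=
  le_csSup (ell_bdd hα hα1 hD hs) h

lemma ell_lt (hα : 0 < α) (hα1 : α < 1) (hD : 0 < fdiam X)
    (hs : 0 < Metric.diam (s : Set X)) :
    α ^ (ell α s + 1) * fdiam X < Metric.diam (s : Set X) := by
  by_contra hc
  push_neg at hc
  have := ell_ge hα hα1 hD hs hc
  omega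

variable [DecidableEq X]

/-- the greedy labelled net. -/
noncomputable def build (α : ℝ) (ρ : X → ℝ) : ℕ → Finset X → ℕ → LTree X
  | 0, s, m₀ => .node s m₀ []
  | (fuel+1), s, m₀ =>
      if 2 ≤ s.card then
        .node s (ell α s)
          ((pieces ρ (α ^ (ell α s + 2) * fdiam X / 4) s).map
            (fun p => build α ρ fuel p.2 (ell α s + 2)))
      else .node s m₀ []

lemma build_set (α : ℝ) (ρ : X → ℝ) (fuel : ℕ) (s : Finset X) (m₀ : ℕ) :
    (build α ρ fuel s m₀).set = s := by
  match fuel with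
  | 0 => rfl
  | (fuel+1) =>
    rw [build]
    split_ifs <;> rfl

lemma build_label_ge (hα : 0 < α) (hα1 : α < 1) (hD : 0 < fdiam X) (ρ : X → ℝ)
    (fuel : ℕ) (s : Finset X) (m₀ : ℕ)
    (hdiam : Metric.diam (s : Set X) ≤ α ^ m₀ * fdiam X) :
    m₀ ≤ (build α ρ fuel s m₀).label := by
  match fuel with
  | 0 => exact le_refl _
  | (fuel+1) =>
    rw [build]
    split_ifs with h2
    · simp only [LTree.label]
      exact ell_ge hα hα1 hD (diam_pos_of_two h2) hdiam
    · exact le_refl _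

end Build

section Valid
variable {X : Type} [MetricSpace X] [Fintype X] [DecidableEq X] {α : ℝ}

lemma piece_diam (ρ : X → ℝ) {a : ℝ} (ha : 0 ≤ a) {t : Finset X} {p : X × Finset X}
    (hp : p ∈ pieces ρ a t) : Metric.diam (p.2 : Set X) ≤ 4 * a := by
  refine Metric.diam_le_of_forall_dist_le (by linarith) ?_
  intro x hx y hy
  exact pieces_dist ρ ha t p hp x (by exact_mod_cast hx) y (by exact_mod_cast hy)

lemma piece_card_lt (hα : 0 < α) (hα1 : α < 1) (hD : 0 < fdiam X) (ρ : X → ℝ)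
    {s : Finset X} (h2 : 2 ≤ s.card) {p : X × Finset X}
    (hp : p ∈ pieces ρ (α ^ (ell α s + 2) * fdiam X / 4) s) : p.2.card < s.card := by
  have hs := diam_pos_of_two (s := s) h2
  have ha : (0:ℝ) ≤ α ^ (ell α s + 2) * fdiam X / 4 := by positivity
  have hd : Metric.diam (p.2 : Set X) ≤ α ^ (ell α s + 2) * fdiam X := by
    have := piece_diam ρ ha hp
    linarith
  have hne : p.2 ≠ s := by
    intro he
    rw [he] at hd
    have h1 : α ^ (ell α s + 2) ≤ α ^ (ell α s + 1) :=
      pow_le_pow_of_le_one hα.le hα1.le (by omega)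
    have h2' : α ^ (ell α s + 2) * fdiam X ≤ α ^ (ell α s + 1) * fdiam X := by nlinarith
    have := ell_lt hα hα1 hD hs
    linarith
  exact Finset.card_lt_card (Finset.ssubset_iff_subset_ne.2 ⟨(pieces_subset ρ _ s p hp).1, hne⟩)

lemma build_valid (hα : 0 < α) (hα1 : α < 1) (hD : 0 < fdiam X) (ρ : X → ℝ) :
    ∀ (fuel : ℕ) (s : Finset X) (m₀ : ℕ), s.Nonempty → s.card ≤ fuel →
      Metric.diam (s : Set X) ≤ α ^ m₀ * fdiam X → ValidLNet α (build α ρ fuel s m₀) := by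
  intro fuel
  induction fuel with
  | zero =>
    intro s m₀ hne hcard _
    exact absurd (Finset.card_pos.2 hne) (by omega)
  | succ fuel ih =>
    intro s m₀ hne hcard hdiam
    rw [build]
    split_ifs with h2
    · set m := ell α s with hm
      set a : ℝ := α ^ (m + 2) * fdiam X / 4 with haa
      have ha : (0:ℝ) ≤ a := by positivity
      have hs := diam_pos_of_two (s := s) h2
      have hdiamp : ∀ p ∈ pieces ρ a s, Metric.diam (p.2 : Set X) ≤ α ^ (m + 2) * fdiam X := by
        intro p hp
        have := piece_diam ρ ha hp
        linarith
      refine ValidLNet.node _ _ _ ?_ ?_ ?_ ?_ ?_ ?_ ?_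
      · intro hnil
        rw [List.map_eq_nil_iff] at hnil
        exact absurd hnil (pieces_ne_nil ρ a hne)
      · intro c hc
        obtain ⟨p, hp, rfl⟩ := List.mem_map.1 hc
        rw [build_set]
        exact (pieces_subset ρ a s p hp).1
      · intro _ x hx
        obtain ⟨p, hp, hxp⟩ := pieces_cover ρ a s x hx
        exact ⟨build α ρ fuel p.2 (m + 2), List.mem_map_of_mem hp, by rw [build_set]; exact hxp⟩
      · have hpw : ((pieces ρ a s).map (fun p => build α ρ fuel p.2 (m + 2))).Pairwise
            (fun c d => Disjoint (LTree.set c) (LTree.set d)) := by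
          refine List.Pairwise.map _ ?_ (pieces_pairwise ρ a s)
          intro p q hpq
          rw [build_set, build_set]
          exact hpq
        intro i j hij
        rcases lt_or_gt_of_ne hij with h | h
        · exact List.pairwise_iff_get.1 hpw i j h
        · exact (List.pairwise_iff_get.1 hpw j i h).symm
      · exact ell_le hα hα1 hD hs
      · intro c hc
        obtain ⟨p, hp, rfl⟩ := List.mem_map.1 hc
        have := build_label_ge hα hα1 hD ρ fuel p.2 (m + 2) (hdiamp p hp)
        omega
      · intro c hc
        obtain ⟨p, hp, rfl⟩ := List.mem_map.1 hc
        exact ih p.2 (m + 2) (pieces_subset ρ a s p hp).2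
          (by have := piece_card_lt hα hα1 hD ρ h2 hp; omega) (hdiamp p hp)
    · refine ValidLNet.node _ _ _ ?_ ?_ ?_ ?_ ?_ ?_ ?_
      · intro _
        have := Finset.card_pos.2 hne
        omega
      · simp
      · simp
      · intro i j _
        exact absurd i.isLt (by simp)
      · exact hdiam
      · simp
      · simp

end Valid

section Value
open scoped ENNReal

lemma ofReal_foldr_max_le {l : List ℝ} {T : ℝ≥0∞} (h : ∀ y ∈ l, ENNReal.ofReal y ≤ T) :
    ENNReal.ofReal (l.foldr max 0) ≤ T := by
  induction l with
  | nil => simp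
  | cons a l ih =>
    rw [List.foldr_cons]
    rcases max_cases a (l.foldr max 0) with ⟨heq, _⟩ | ⟨heq, _⟩ <;> rw [heq]
    · exact h a (List.mem_cons_self)
    · exact ih fun y hy => h y (List.mem_cons_of_mem _ hy)

lemma mul_biSup {Y : Type} (K : ℝ≥0∞) (C : Finset Y) (F : Y → ℝ≥0∞) :
    K * ⨆ x ∈ C, F x = ⨆ x ∈ C, K * F x := by
  simp_rw [ENNReal.mul_iSup]

lemma add_biSup_le {Y : Type} {c : ℝ≥0∞} {C : Finset Y} (hC : C.Nonempty) {F G : Y → ℝ≥0∞}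
    (h : ∀ x ∈ C, c + F x ≤ G x) : (c + ⨆ x ∈ C, F x) ≤ ⨆ x ∈ C, G x := by
  haveI : Nonempty {x // x ∈ C} := ⟨⟨hC.choose, hC.choose_spec⟩⟩
  rw [iSup_subtype']
  rw [ENNReal.add_iSup]
  refine iSup_le fun x => ?_
  refine le_trans (h x x.2) ?_
  exact le_iSup₂ (f := fun y (_ : y ∈ C) => G y) x.1 x.2

variable {X : Type} [MetricSpace X] [Fintype X] [DecidableEq X] {α : ℝ}

lemma build_val (f : ℝ → ℝ) (hα : 0 < α) (hα10 : α ≤ 1/10) (hD : 0 < fdiam X)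
    {ρ : X → ℝ} (hρ : IsProbOn ρ) :
    ∀ (fuel : ℕ) (s : Finset X) (m₀ : ℕ), s.Nonempty → s.card ≤ fuel →
      Metric.diam (s : Set X) ≤ α ^ m₀ * fdiam X →
      ENNReal.ofReal (LTree.val f α (build α ρ fuel s m₀)) ≤
        ENNReal.ofReal (8 / α ^ 2) *
          ⨆ x ∈ s, ∫⁻ r in Set.Ioc (0:ℝ)
              (α ^ ((build α ρ fuel s m₀).label + 2) * fdiam X / 4),
            chainFnE f (ballMass ρ x r) := by
  have hα1 : α < 1 := by linarith
  intro fuel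
  induction fuel with
  | zero =>
    intro s m₀ hne hcard _
    exact absurd (Finset.card_pos.2 hne) (by omega)
  | succ fuel ih =>
    intro s m₀ hne hcard hdiam
    rw [build]
    split_ifs with h2
    · set m := ell α s with hm
      set D := fdiam X with hDD
      set a : ℝ := α ^ (m + 2) * D / 4 with haa
      have ha : (0:ℝ) ≤ a := by positivity
      have hα2 : α^2 ≤ 1/2 := by nlinarith
      set K : ℝ≥0∞ := ENNReal.ofReal (8 / α ^ 2) with hK
      simp only [LTree.label]
      rw [LTree.val]
      refine ofReal_foldr_max_le ?_
      intro y hy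
      obtain ⟨i, hilen, hEq⟩ := List.mem_iff_getElem.1 hy
      simp only [List.length_map, List.length_zipIdx, List.length_attach] at hilen
      have hplen : i < (pieces ρ a s).length := hilen
      simp only [List.getElem_map, List.getElem_zipIdx, Prod.swap_prod_mk, zero_add, List.getElem_attach] at hEq
      rw [← hEq]
      clear hEq hy y
      set p := (pieces ρ a s)[i] with hpdef
      have hp_mem : p ∈ pieces ρ a s := List.getElem_mem _
      have hCsub : p.2 ⊆ s := (pieces_subset ρ a s p hp_mem).1
      have hCne : p.2.Nonempty := (pieces_subset ρ a s p hp_mem).2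
      have hdiamC : Metric.diam (p.2 : Set X) ≤ α ^ (m + 2) * D := by
        have := piece_diam ρ ha hp_mem
        linarith
      have hCcard : p.2.card ≤ fuel := by
        have := piece_card_lt hα hα1 hD ρ h2 hp_mem
        omega
      have IH := ih p.2 (m + 2) hCne hCcard hdiamC
      set lab := (build α ρ fuel p.2 (m + 2)).label with hlabdef
      have hlab : m + 2 ≤ lab := build_label_ge hα hα1 hD ρ fuel p.2 (m + 2) hdiamC
      set b : ℝ := α ^ (lab + 2) * D / 4 with hbb
      have hb0 : (0:ℝ) ≤ b := by positivity
      have hb2 : b ≤ α ^ 2 * a := by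
        have h1 : α ^ (lab + 2) ≤ α ^ (m + 4) :=
          pow_le_pow_of_le_one hα.le hα1.le (by omega)
        have h2' : α ^ (m + 4) = α ^ (m + 2) * α ^ 2 := by
          rw [← pow_add]
        have hDle : (0:ℝ) ≤ D := hD.le
        rw [hbb, haa]
        calc α ^ (lab + 2) * D / 4 ≤ α ^ (m + 4) * D / 4 := by nlinarith
        _ = α ^ 2 * (α ^ (m + 2) * D / 4) := by rw [h2']; ring
      have hba : b ≤ a := by nlinarith [mul_le_mul_of_nonneg_right hα2 ha]
      have hmass : ∀ x ∈ p.2, ballMass ρ x a ≤ 1 / ((i:ℝ) + 1) := by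
        intro x hx
        obtain ⟨Z, _, hZcard, hZmax, hZsep⟩ :=
          pieces_greedy ρ a s i p (List.getElem?_eq_getElem hplen) x hx
        have := greedy_mass hρ hZcard hZmax hZsep
        rw [le_div_iff₀ (by positivity)]
        linarith
      set hcFn : ℝ := chainFn f (1 / ((i + 1 : ℕ) : ℝ)) with hcFndef
      have hcFn0 : 0 ≤ hcFn := chainFn_nonneg f _
      have key : ∀ x ∈ p.2,
          ENNReal.ofReal (α ^ m * D * hcFn) +
            K * ∫⁻ r in Set.Ioc (0:ℝ) b, chainFnE f (ballMass ρ x r) ≤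
          K * ∫⁻ r in Set.Ioc (0:ℝ) a, chainFnE f (ballMass ρ x r) := by
        intro x hx
        have hsplit : (∫⁻ r in Set.Ioc (0:ℝ) a, chainFnE f (ballMass ρ x r)) =
            (∫⁻ r in Set.Ioc (0:ℝ) b, chainFnE f (ballMass ρ x r)) +
            (∫⁻ r in Set.Ioc b a, chainFnE f (ballMass ρ x r)) := by
          rw [← Set.Ioc_union_Ioc_eq_Ioc hb0 hba]
          exact MeasureTheory.lintegral_union measurableSet_Ioc (Set.Ioc_disjoint_Ioc_of_le le_rfl)
        rw [hsplit, mul_add]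
        have hterm : ENNReal.ofReal (α ^ m * D * hcFn) ≤
            K * ∫⁻ r in Set.Ioc b a, chainFnE f (ballMass ρ x r) := by
          have hlow : ∀ r ∈ Set.Ioc b a,
              ENNReal.ofReal hcFn ≤ chainFnE f (ballMass ρ x r) := by
            intro r hr
            refine (ofReal_chainFn_le f _).trans (chainFnE_anti f ?_)
            have h1 : ballMass ρ x r ≤ ballMass ρ x a := ballMass_mono ρ hρ.1 x hr.2
            have h2' := hmass x hx
            push_cast
            linarith
          have hIl : ENNReal.ofReal hcFn * MeasureTheory.volume (Set.Ioc b a) ≤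
              ∫⁻ r in Set.Ioc b a, chainFnE f (ballMass ρ x r) := by
            rw [← MeasureTheory.setLIntegral_const]
            exact MeasureTheory.setLIntegral_mono' measurableSet_Ioc hlow
          rw [Real.volume_Ioc] at hIl
          have hcore : α ^ m * D * α ^ 2 ≤ 8 * (a - b) := by
            have h4a : 4 * a = α ^ m * α ^ 2 * D := by
              rw [haa, show m + 2 = m + 2 from rfl, pow_add]; ring
            have hint : α ^ 2 * a ≤ 1/2 * a := mul_le_mul_of_nonneg_right hα2 ha
            linarith
          have hreal : α ^ m * D * hcFn ≤ 8 / α ^ 2 * (hcFn * (a - b)) := by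
            rw [div_mul_eq_mul_div, le_div_iff₀ (pow_pos hα 2)]
            nlinarith [mul_le_mul_of_nonneg_right hcore hcFn0]
          calc ENNReal.ofReal (α ^ m * D * hcFn)
              ≤ ENNReal.ofReal (8 / α ^ 2 * (hcFn * (a - b))) :=
                ENNReal.ofReal_le_ofReal hreal
          _ = K * (ENNReal.ofReal hcFn * ENNReal.ofReal (a - b)) := by
                rw [ENNReal.ofReal_mul (by positivity), ENNReal.ofReal_mul hcFn0]
          _ ≤ K * ∫⁻ r in Set.Ioc b a, chainFnE f (ballMass ρ x r) :=
                mul_le_mul_right hIl K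
        exact (add_le_add_left hterm _).trans_eq (add_comm _ _)
      calc ENNReal.ofReal (α ^ m * D * hcFn + LTree.val f α (build α ρ fuel p.2 (m + 2)))
          ≤ ENNReal.ofReal (α ^ m * D * hcFn) +
            ENNReal.ofReal (LTree.val f α (build α ρ fuel p.2 (m + 2))) :=
            ENNReal.ofReal_add_le
      _ ≤ ENNReal.ofReal (α ^ m * D * hcFn) +
            K * ⨆ x ∈ p.2, ∫⁻ r in Set.Ioc (0:ℝ) b, chainFnE f (ballMass ρ x r) :=
            add_le_add_right IH _
      _ = ENNReal.ofReal (α ^ m * D * hcFn) +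
            ⨆ x ∈ p.2, K * ∫⁻ r in Set.Ioc (0:ℝ) b, chainFnE f (ballMass ρ x r) := by
            rw [mul_biSup]
      _ ≤ ⨆ x ∈ p.2, K * ∫⁻ r in Set.Ioc (0:ℝ) a, chainFnE f (ballMass ρ x r) :=
            add_biSup_le hCne key
      _ = K * ⨆ x ∈ p.2, ∫⁻ r in Set.Ioc (0:ℝ) a, chainFnE f (ballMass ρ x r) :=
            (mul_biSup _ _ _).symm
      _ ≤ K * ⨆ x ∈ s, ∫⁻ r in Set.Ioc (0:ℝ) a, chainFnE f (ballMass ρ x r) :=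
            mul_le_mul_right (biSup_mono fun x hx => hCsub hx) _
    · have hval : LTree.val f α (LTree.node s m₀ []) = 0 := by
        rw [LTree.val]
        rfl
      rw [hval]
      simp

end Value

/-- for every `α ∈ (0,1/10]` there is a constant `c(α) > 0` such
that for every finite metric space `X` with at least two points, every chaining
functional `h` of log-concave type and every probability measure `ρ` on `X`,
there is an `α`-labelled net `L` on `X` with
`val_h(L) ≤ c(α)·max_{x∈X} ∫₀^∞ h(ρ(B(x,r))) dr`. -/
theorem stmt11 (α : ℝ) (hα : α ∈ Set.Ioc (0:ℝ) (1/10)) :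
    ∃ c : ℝ, 0 < c ∧
      ∀ (X : Type) [MetricSpace X] [Fintype X] [Nontrivial X],
      ∀ (f : ℝ → ℝ), IsChainingDensity f →
      ∀ (ρ : X → ℝ), IsProbOn ρ →
      ∃ L : LTree X, ValidLNet α L ∧ LTree.set L = Finset.univ ∧
        ENNReal.ofReal (LTree.val f α L) ≤ ENNReal.ofReal c * (⨆ x : X, Hint f ρ x) := by
  obtain ⟨hα0, hα10⟩ := hα
  refine ⟨8 / α ^ 2, by positivity, ?_⟩
  intro X _ _ _ f _ ρ hρ
  letI : DecidableEq X := Classical.decEq X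
  have hD : 0 < fdiam X := by
    obtain ⟨x, y, hxy⟩ := exists_pair_ne X
    have h1 : dist x y ≤ fdiam X :=
      Metric.dist_le_diam_of_mem Set.finite_univ.isBounded trivial trivial
    have h2 := dist_pos.2 hxy
    linarith
  have hne : (Finset.univ : Finset X).Nonempty := Finset.univ_nonempty
  have hdiam : Metric.diam ((Finset.univ : Finset X) : Set X) ≤ α ^ 0 * fdiam X := by
    rw [pow_zero, one_mul, Finset.coe_univ]
    exact le_refl _
  refine ⟨build α ρ (Finset.univ : Finset X).card Finset.univ 0,
    build_valid hα0 (by linarith) hD ρ _ _ _ hne le_rfl hdiam,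
    build_set α ρ _ _ _, ?_⟩
  refine (build_val f hα0 hα10 hD hρ _ _ _ hne le_rfl hdiam).trans ?_
  refine mul_le_mul_right ?_ _
  refine iSup₂_le fun x _ => ?_
  refine le_trans (MeasureTheory.lintegral_mono_set Set.Ioc_subset_Ioi_self) ?_
  exact le_iSup (Hint f ρ) x
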